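/- arXiv:2401.09125 — 2 statements merged into one kernel-verified Lean document; each statement's English description precedes it below -/
import Mathlib

section
/- For α > 0 and η ∈ (1/2, 1), define f(α, η) = η·Φ(α/2 + (1/α)ln(η/(1-η))) + (1-η)·Φ(α/2 - (1/α)ln(η/(1-η))), where Φ is the standard Gaussian CDF. Then f is strictly increasing in α: if α₁ > α₂ > 0, then f(α₁, η) > f(α₂, η). -/
open MeasureTheory ProbabilityTheory Real Set

private noncomputable def myP (x : ℝ) : ℝ := gaussianPDFReal 0 1 x

private lemma myP_eq (x : ℝ) : myP x = (√(2 * π))⁻¹ * rexp (-x ^ 2 / 2) := by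
  simp [myP, gaussianPDFReal]

private lemma myP_cont : Continuous myP := by
  simp only [funext myP_eq]
  continuity

private lemma myP_pos (x : ℝ) : 0 < myP x := gaussianPDFReal_pos 0 1 x one_ne_zero

private noncomputable def myF (x : ℝ) : ℝ := ∫ t in Iic x, myP t

private lemma cdf_eq_myF (x : ℝ) : cdf (gaussianReal 0 1) x = myF x := by
  rw [cdf_eq_real, measureReal_def, gaussianReal_apply_eq_integral 0 one_ne_zero,
    ENNReal.toReal_ofReal]
  · rfl
  · exact integral_nonneg fun t => gaussianPDFReal_nonneg 0 1 t

private lemma myF_hasDerivAt (x : ℝ) : HasDerivAt myF (myP x) x := by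
  have hint : Integrable myP := integrable_gaussianPDFReal 0 1
  have key : ∀ y, myF y = myF 0 + ∫ t in (0:ℝ)..y, myP t := by
    intro y
    have h := intervalIntegral.integral_Iic_sub_Iic (μ := volume) (a := (0:ℝ)) (b := y)
      hint.integrableOn hint.integrableOn
    simp only [myF]
    linarith
  rw [funext key]
  exact (intervalIntegral.integral_hasDerivAt_right hint.intervalIntegrable
    myP_cont.aestronglyMeasurable.stronglyMeasurableAtFilter
    myP_cont.continuousAt).const_add _

theorem stmt4 (f : ℝ → ℝ → ℝ)
    (hf : ∀ α η, f α η =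
      η * cdf (gaussianReal 0 1) (α / 2 + (1 / α) * Real.log (η / (1 - η))) +
      (1 - η) * cdf (gaussianReal 0 1) (α / 2 - (1 / α) * Real.log (η / (1 - η))))
    (η : ℝ) (hη : η ∈ Set.Ioo (1 / 2 : ℝ) 1)
    (α₁ α₂ : ℝ) (h1 : α₁ > α₂) (h2 : α₂ > 0) :
    f α₁ η > f α₂ η := by
  obtain ⟨hη1, hη2⟩ := hη
  have hη0 : 0 < η := by linarith
  have h1η : 0 < 1 - η := by linarith
  set c : ℝ := Real.log (η / (1 - η)) with hc
  have hexp : rexp c = η / (1 - η) := Real.exp_log (by positivity)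
  set a : ℝ → ℝ := fun α => α / 2 + (1 / α) * c with ha
  set b : ℝ → ℝ := fun α => α / 2 - (1 / α) * c with hb
  set g : ℝ → ℝ := fun α => η * myF (a α) + (1 - η) * myF (b α) with hg
  have hfg : ∀ α, f α η = g α := by
    intro α
    rw [hf, hg, cdf_eq_myF, cdf_eq_myF]
  -- key identity
  have hkey : ∀ α : ℝ, α ≠ 0 → (1 - η) * myP (b α) = η * myP (a α) := by
    intro α hα
    rw [myP_eq, myP_eq]
    have hsq : a α ^ 2 = b α ^ 2 + 2 * c := by
      simp only [ha, hb]
      field_simp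
      ring
    rw [hsq]
    have : rexp (-(b α ^ 2 + 2 * c) / 2) = rexp (-(b α ^ 2) / 2) * rexp (-c) := by
      rw [← Real.exp_add]; ring_nf
    rw [this]
    have hec : rexp (-c) = (1 - η) / η := by
      rw [Real.exp_neg, hexp]
      field_simp
    rw [hec]
    field_simp
  -- derivative of g
  have hderiv : ∀ α : ℝ, 0 < α → HasDerivAt g (η * myP (a α)) α := by
    intro α hα
    have hα' : α ≠ 0 := hα.ne'
    have hinv : HasDerivAt (fun x : ℝ => (1 / x) * c) (-(α ^ 2)⁻¹ * c) α := by
      simpa [one_div] using (hasDerivAt_inv hα').mul_const c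
    have hdhalf : HasDerivAt (fun x : ℝ => x / 2) (1 / 2) α := by
      simpa using (hasDerivAt_id α).div_const 2
    have hda : HasDerivAt a (1 / 2 + -(α ^ 2)⁻¹ * c) α := hdhalf.add hinv
    have hdb : HasDerivAt b (1 / 2 - -(α ^ 2)⁻¹ * c) α := hdhalf.sub hinv
    have h1 : HasDerivAt (fun α => myF (a α)) (myP (a α) * (1 / 2 + -(α ^ 2)⁻¹ * c)) α :=
      (myF_hasDerivAt (a α)).comp α hda
    have h2 : HasDerivAt (fun α => myF (b α)) (myP (b α) * (1 / 2 - -(α ^ 2)⁻¹ * c)) α :=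
      (myF_hasDerivAt (b α)).comp α hdb
    have := ((h1.const_mul η).add (h2.const_mul (1 - η)))
    convert this using 1
    · rfl
    · rfl
    · rfl
    have hk := hkey α hα'
    linear_combination (-(1:ℝ)/2 - (α ^ 2)⁻¹ * c) * hk
  have hpos : ∀ α ∈ interior (Set.Ioi (0:ℝ)), 0 < deriv g α := by
    intro α hα
    rw [interior_Ioi] at hα
    rw [(hderiv α hα).deriv]
    exact mul_pos hη0 (myP_pos _)
  have hmono : StrictMonoOn g (Set.Ioi 0) := by
    apply strictMonoOn_of_deriv_pos (convex_Ioi 0) _ hpos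
    intro α hα
    exact (hderiv α hα).continuousAt.continuousWithinAt
  rw [hfg, hfg]
  exact hmono (Set.mem_Ioi.mpr h2) (Set.mem_Ioi.mpr (h2.trans h1)) h1
end

section
/- For α > 0 and η ∈ (1/2, 1), define f(α, η) = η·Φ(α/2 + (1/α)ln(η/(1-η))) + (1-η)·Φ(α/2 - (1/α)ln(η/(1-η))), where Φ is the standard Gaussian CDF. Then f is strictly increasing in η: if 1/2 < η < η' < 1, then f(α, η') > f(α, η). -/
open MeasureTheory ProbabilityTheory Set

noncomputable def Phi : ℝ → ℝ := fun x => cdf (gaussianReal 0 1) x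
noncomputable def phi : ℝ → ℝ := gaussianPDFReal 0 1

lemma Phi_eq (x : ℝ) : Phi x = ∫ t in Iic x, phi t := by
  rw [Phi, cdf_eq_real, measureReal_def, gaussianReal_apply_eq_integral 0 one_ne_zero,
    ENNReal.toReal_ofReal (integral_nonneg fun t => gaussianPDFReal_nonneg 0 1 t)]
  rfl

lemma phi_cont : Continuous phi := by
  unfold phi; rw [gaussianPDFReal_def]; continuity

lemma hasDerivAt_Phi (x : ℝ) : HasDerivAt Phi (phi x) x := by
  have hint : Integrable phi := integrable_gaussianPDFReal 0 1
  have h : ∀ y, Phi y = Phi 0 + ∫ t in (0:ℝ)..y, phi t := by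
    intro y
    rw [Phi_eq, Phi_eq,
      ← intervalIntegral.integral_Iic_sub_Iic hint.integrableOn hint.integrableOn]
    ring
  have h2 := (intervalIntegral.integral_hasDerivAt_right (a := 0) (b := x) hint.intervalIntegrable
    phi_cont.stronglyMeasurable.stronglyMeasurableAtFilter
    phi_cont.continuousAt).const_add (Phi 0)
  exact h2.congr_of_eventuallyEq (Filter.Eventually.of_forall h)

lemma Phi_lt {a b : ℝ} (h : a < b) : Phi a < Phi b := by
  have hint : Integrable phi := integrable_gaussianPDFReal 0 1
  have heq : Phi b - Phi a = ∫ t in a..b, phi t := by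
    rw [Phi_eq, Phi_eq,
      intervalIntegral.integral_Iic_sub_Iic hint.integrableOn hint.integrableOn]
  have hpos : 0 < ∫ t in a..b, phi t :=
    intervalIntegral.intervalIntegral_pos_of_pos hint.intervalIntegrable
      (fun x => gaussianPDFReal_pos 0 1 x one_ne_zero) h
  linarith

lemma phi_eq (x : ℝ) : phi x = (Real.sqrt (2 * Real.pi))⁻¹ * Real.exp (-x ^ 2 / 2) := by
  simp [phi, gaussianPDFReal]

lemma key (α : ℝ) (hα : 0 < α) (s : ℝ) (hs0 : 0 < s) (hs1 : s < 1) :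
    HasDerivAt (fun t => t * Phi (α / 2 + (1 / α) * Real.log (t / (1 - t))) +
        (1 - t) * Phi (α / 2 - (1 / α) * Real.log (t / (1 - t))))
      (Phi (α / 2 + (1 / α) * Real.log (s / (1 - s))) -
        Phi (α / 2 - (1 / α) * Real.log (s / (1 - s)))) s := by
  have h1s : 0 < 1 - s := by linarith
  set L : ℝ := Real.log (s / (1 - s)) with hLdef
  -- derivative of t ↦ log (t / (1-t)) at s
  have hL : HasDerivAt (fun t => Real.log (t / (1 - t))) (1 / (s * (1 - s))) s := by
    have h1 : HasDerivAt (fun t : ℝ => Real.log t) s⁻¹ s := Real.hasDerivAt_log hs0.ne'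
    have h2 : HasDerivAt (fun t : ℝ => Real.log (1 - t)) (-(1 - s)⁻¹) s := by
      have := (Real.hasDerivAt_log h1s.ne').comp s
        ((hasDerivAt_const s (1:ℝ)).sub (hasDerivAt_id s))
      simpa [Function.comp_def] using this
    have h3 := h1.sub h2
    have heq : (fun t : ℝ => Real.log t - Real.log (1 - t)) =ᶠ[nhds s]
        fun t => Real.log (t / (1 - t)) := by
      filter_upwards [IsOpen.mem_nhds (isOpen_Ioo (a := (0:ℝ)) (b := 1)) ⟨hs0, hs1⟩] with t ht
      rw [Real.log_div (ne_of_gt ht.1) (by linarith [ht.2])]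
    have h4 := h3.congr_of_eventuallyEq heq.symm
    refine h4.congr_deriv (Eq.symm ?_)
    field_simp
    ring
  have hp : HasDerivAt (fun t => α / 2 + (1 / α) * Real.log (t / (1 - t)))
      (1 / α * (1 / (s * (1 - s)))) s := by exact ((hasDerivAt_const s (α / 2)).add (hL.const_mul (1 / α))).congr_deriv (by ring)
  have hq : HasDerivAt (fun t => α / 2 - (1 / α) * Real.log (t / (1 - t)))
      (-(1 / α * (1 / (s * (1 - s))))) s := by exact ((hasDerivAt_const s (α / 2)).sub (hL.const_mul (1 / α))).congr_deriv (by ring)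
  have hPp := ((hasDerivAt_Phi (α / 2 + (1 / α) * L)).comp s hp)
  have hPq := ((hasDerivAt_Phi (α / 2 - (1 / α) * L)).comp s hq)
  have h5 := ((hasDerivAt_id s).mul hPp).add
    (((hasDerivAt_const s (1:ℝ)).sub (hasDerivAt_id s)).mul hPq)
  refine h5.congr_deriv (Eq.symm ?_)
  have hkey : s * phi (α / 2 + (1 / α) * L) = (1 - s) * phi (α / 2 - (1 / α) * L) := by
    have hexp : Real.exp (-(α / 2 + (1 / α) * L) ^ 2 / 2) =
        Real.exp (-(α / 2 - (1 / α) * L) ^ 2 / 2) * ((1 - s) / s) := by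
      rw [show (1 - s) / s = Real.exp (-L) by
          rw [hLdef, ← Real.log_inv, Real.exp_log (by positivity), inv_div],
        ← Real.exp_add]
      congr 1
      have hα' : α ≠ 0 := hα.ne'
      field_simp
      ring
    rw [phi_eq, phi_eq, hexp]
    have hs' : s ≠ 0 := hs0.ne'
    field_simp
  simp only [Function.comp, id_eq, Pi.sub_apply]
  rw [← hLdef]
  linear_combination (-(1 / α * (1 / (s * (1 - s))))) * hkey

theorem stmt5 (f : ℝ → ℝ → ℝ)
    (hf : ∀ α η, f α η =
      η * cdf (gaussianReal 0 1) (α / 2 + (1 / α) * Real.log (η / (1 - η))) +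
      (1 - η) * cdf (gaussianReal 0 1) (α / 2 - (1 / α) * Real.log (η / (1 - η))))
    (α : ℝ) (hα : 0 < α)
    (η η' : ℝ) (hη : 1 / 2 < η) (hηη' : η < η') (hη' : η' < 1) :
    f α η' > f α η := by
  set g : ℝ → ℝ := fun t => t * Phi (α / 2 + (1 / α) * Real.log (t / (1 - t))) +
    (1 - t) * Phi (α / 2 - (1 / α) * Real.log (t / (1 - t))) with hg
  have hfa : ∀ t, f α t = g t := fun t => hf α t
  have hsub : ∀ x ∈ Icc η η', 0 < x ∧ x < 1 := fun x hx =>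
    ⟨by linarith [hx.1], by linarith [hx.2]⟩
  obtain ⟨c, hc, hceq⟩ := exists_hasDerivAt_eq_slope g
    (fun t => Phi (α / 2 + (1 / α) * Real.log (t / (1 - t))) -
      Phi (α / 2 - (1 / α) * Real.log (t / (1 - t)))) hηη'
    (fun x hx => ((key α hα x (hsub x hx).1 (hsub x hx).2).continuousAt).continuousWithinAt)
    (fun x hx => key α hα x (hsub x (Ioo_subset_Icc_self hx)).1
      (hsub x (Ioo_subset_Icc_self hx)).2)
  have hc0 : 1 / 2 < c := lt_trans hη hc.1
  have hc1 : c < 1 := lt_trans hc.2 hη'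
  have hLpos : 0 < Real.log (c / (1 - c)) :=
    Real.log_pos ((one_lt_div (by linarith)).mpr (by linarith))
  have hlt : α / 2 - (1 / α) * Real.log (c / (1 - c)) <
      α / 2 + (1 / α) * Real.log (c / (1 - c)) := by
    have h1 : 0 < (1 / α) * Real.log (c / (1 - c)) := by positivity
    linarith
  have hPhi := Phi_lt hlt
  have hslope : 0 < (g η' - g η) / (η' - η) := by rw [← hceq]; linarith
  have hd : (0:ℝ) < η' - η := sub_pos.mpr hηη'
  have hgt : 0 < g η' - g η := by
    have := mul_pos hslope hd
    rwa [div_mul_cancel₀ _ hd.ne'] at this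
  rw [hfa, hfa]
  linarith
end
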